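/- Let R(E₈) = {±e_i ± e_j : 1 ≤ i < j ≤ 8} ∪ {(1/2)∑_{i=1}^{8} ε_i e_i : ε_i ∈ {±1}, ∏_{i=1}^{8} ε_i = 1} ⊂ ℝ⁸, and let R(E₆) = {α ∈ R(E₈) : ⟨α, e₆ + e₈⟩ = 0 and ⟨α, e₇ + e₈⟩ = 0}. Then the four vectors e₃ − e₂, (1/2)(e₁ + e₂ + e₃ + e₄ + e₅ − e₆ − e₇ + e₈), (1/2)(−e₁ − e₂ − e₃ − e₄ + e₅ − e₆ − e₇ + e₈), and e₄ − e₁ all belong to R(E₆) and form a strongly orthogonal subset of R(E₆) with 4 elements. -/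

import Mathlib

open RealInnerProductSpace

/-- A subset `S` of a set `R` of vectors is *strongly orthogonal* (relative to
`R`) if `S ⊆ R` and for all distinct `α, β ∈ S` one has `α ≠ -β`,
`α + β ∉ R` and `α - β ∉ R`. -/
def IsStronglyOrthSubset {V : Type*} [AddCommGroup V] (R S : Set V) : Prop :=
  S ⊆ R ∧ S.Pairwise fun α β => α ≠ -β ∧ α + β ∉ R ∧ α - β ∉ R

/-- The `i`-th standard basis vector of `ℝⁿ`, in 1-based indexing. -/
noncomputable def stdVec (n : ℕ) (i : ℕ) : EuclideanSpace ℝ (Fin n) :=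
  (WithLp.equiv 2 (Fin n → ℝ)).symm fun j => if (j : ℕ) + 1 = i then 1 else 0

/-- The root system of type `E₈` in `ℝ⁸`. -/
noncomputable def rootsE8 : Set (EuclideanSpace ℝ (Fin 8)) :=
  {x | ∃ i j : ℕ, 1 ≤ i ∧ i < j ∧ j ≤ 8 ∧
      (x = stdVec 8 i + stdVec 8 j ∨ x = stdVec 8 i - stdVec 8 j ∨
       x = -stdVec 8 i + stdVec 8 j ∨ x = -stdVec 8 i - stdVec 8 j)} ∪
  {x | (∀ i : Fin 8, x i = 1 / 2 ∨ x i = -(1 / 2)) ∧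
      Even (Finset.univ.filter fun i : Fin 8 => x i = -(1 / 2)).card}

/-- The root system of type `E₆`, realized inside `R(E₈)` as the roots
orthogonal to both `e₆ + e₈` and `e₇ + e₈`. -/
noncomputable def rootsE6 : Set (EuclideanSpace ℝ (Fin 8)) :=
  {α ∈ rootsE8 | ⟪α, stdVec 8 6 + stdVec 8 8⟫ = 0 ∧
    ⟪α, stdVec 8 7 + stdVec 8 8⟫ = 0}

lemma fv3 : ((3:Fin 8):ℕ) = 3 := rfl
lemma fv4 : ((4:Fin 8):ℕ) = 4 := rfl
lemma fv5 : ((5:Fin 8):ℕ) = 5 := rfl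
lemma fv6 : ((6:Fin 8):ℕ) = 6 := rfl
lemma fv7 : ((7:Fin 8):ℕ) = 7 := rfl
lemma fz1 : ((1:Fin 8) = 0) ↔ False := by decide
lemma fz2 : ((2:Fin 8) = 0) ↔ False := by decide
lemma fz3 : ((3:Fin 8) = 0) ↔ False := by decide
lemma fz4 : ((4:Fin 8) = 0) ↔ False := by decide
lemma fz5 : ((5:Fin 8) = 0) ↔ False := by decide
lemma fz6 : ((6:Fin 8) = 0) ↔ False := by decide
lemma fz7 : ((7:Fin 8) = 0) ↔ False := by decide

lemma sum_sq_std (i : ℕ) (h1 : 1 ≤ i) (h2 : i ≤ 8) :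
    ∑ k : Fin 8, (stdVec 8 i k)^2 = 1 := by
  interval_cases i <;> rw [Fin.sum_univ_eight] <;>
    norm_num [stdVec, fv3, fv4, fv5, fv6, fv7, fz1, fz2, fz3, fz4, fz5, fz6, fz7]

lemma sum_mul_std (i j : ℕ) (h : i ≠ j) :
    ∑ k : Fin 8, stdVec 8 i k * stdVec 8 j k = 0 := by
  apply Finset.sum_eq_zero
  intro k _
  simp only [stdVec, WithLp.equiv_symm_apply, PiLp.toLp_apply]
  by_cases hk : (k : ℕ) + 1 = i
  · rw [if_pos hk, one_mul, if_neg fun hj => h (hk.symm.trans hj)]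
  · rw [if_neg hk, zero_mul]

lemma sumsq_comb (i j : ℕ) (h1 : 1 ≤ i) (h2 : i < j) (h3 : j ≤ 8) {ε₁ ε₂ : ℝ}
    (he1 : ε₁ = 1 ∨ ε₁ = -1) (he2 : ε₂ = 1 ∨ ε₂ = -1) :
    ∑ k : Fin 8, (ε₁ * stdVec 8 i k + ε₂ * stdVec 8 j k)^2 = 2 := by
  have e1 : ε₁^2 = 1 := by rcases he1 with h|h <;> rw [h] <;> ring
  have e2 : ε₂^2 = 1 := by rcases he2 with h|h <;> rw [h] <;> ring
  have hexp : ∀ k : Fin 8, (ε₁ * stdVec 8 i k + ε₂ * stdVec 8 j k)^2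
      = ε₁^2 * (stdVec 8 i k)^2 + ε₂^2 * (stdVec 8 j k)^2
        + (2*ε₁*ε₂) * (stdVec 8 i k * stdVec 8 j k) := fun k => by ring
  rw [Finset.sum_congr rfl fun k _ => hexp k, Finset.sum_add_distrib,
    Finset.sum_add_distrib, ← Finset.mul_sum, ← Finset.mul_sum, ← Finset.mul_sum,
    sum_sq_std i h1 (h2.le.trans h3), sum_sq_std j (h1.trans h2.le) h3,
    sum_mul_std i j h2.ne, e1, e2]
  ring

lemma normsq_rootsE8 {x : EuclideanSpace ℝ (Fin 8)} (hx : x ∈ rootsE8) :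
    ∑ k : Fin 8, (x k)^2 = 2 := by
  rcases hx with ⟨i, j, h1, h2, h3, hx⟩ | ⟨h4, -⟩
  · rcases hx with h|h|h|h <;> subst h
    · rw [← sumsq_comb i j h1 h2 h3 (Or.inl rfl) (Or.inl rfl)]
      refine Finset.sum_congr rfl fun k _ => ?_
      simp only [PiLp.add_apply]; ring
    · rw [← sumsq_comb i j h1 h2 h3 (Or.inl rfl) (Or.inr rfl)]
      refine Finset.sum_congr rfl fun k _ => ?_
      simp only [PiLp.sub_apply]; ring
    · rw [← sumsq_comb i j h1 h2 h3 (Or.inr rfl) (Or.inl rfl)]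
      refine Finset.sum_congr rfl fun k _ => ?_
      simp only [PiLp.add_apply, PiLp.neg_apply]; ring
    · rw [← sumsq_comb i j h1 h2 h3 (Or.inr rfl) (Or.inr rfl)]
      refine Finset.sum_congr rfl fun k _ => ?_
      simp only [PiLp.sub_apply, PiLp.neg_apply]; ring
  · have hq : ∀ k : Fin 8, (x k)^2 = 1/4 := fun k => by
      rcases h4 k with h|h <;> rw [h] <;> norm_num
    rw [Finset.sum_congr rfl fun k _ => hq k]
    norm_num [Finset.sum_const, Finset.card_univ]

lemma notin6 {x : EuclideanSpace ℝ (Fin 8)} (h : ∑ k : Fin 8, (x k)^2 = 4) :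
    x ∉ rootsE6 := by
  intro hx
  have h2 := normsq_rootsE8 hx.1
  linarith

noncomputable def vA : EuclideanSpace ℝ (Fin 8) := stdVec 8 3 - stdVec 8 2
noncomputable def vB : EuclideanSpace ℝ (Fin 8) :=
  (1 / 2 : ℝ) • (stdVec 8 1 + stdVec 8 2 + stdVec 8 3 + stdVec 8 4 +
    stdVec 8 5 - stdVec 8 6 - stdVec 8 7 + stdVec 8 8)
noncomputable def vC : EuclideanSpace ℝ (Fin 8) :=
  (1 / 2 : ℝ) • (-stdVec 8 1 - stdVec 8 2 - stdVec 8 3 - stdVec 8 4 +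
    stdVec 8 5 - stdVec 8 6 - stdVec 8 7 + stdVec 8 8)
noncomputable def vD : EuclideanSpace ℝ (Fin 8) := stdVec 8 4 - stdVec 8 1

lemma memA : vA ∈ rootsE6 := by
  refine ⟨Or.inl ⟨2, 3, by norm_num, by norm_num, by norm_num,
    Or.inr (Or.inr (Or.inl (by unfold vA; abel)))⟩, ?_, ?_⟩ <;>
  norm_num [vA, PiLp.inner_apply, RCLike.inner_apply, Fin.sum_univ_eight, stdVec,
    fv3, fv4, fv5, fv6, fv7, fz1, fz2, fz3, fz4, fz5, fz6, fz7]

lemma memD : vD ∈ rootsE6 := by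
  refine ⟨Or.inl ⟨1, 4, by norm_num, by norm_num, by norm_num,
    Or.inr (Or.inr (Or.inl (by unfold vD; abel)))⟩, ?_, ?_⟩ <;>
  norm_num [vD, PiLp.inner_apply, RCLike.inner_apply, Fin.sum_univ_eight, stdVec,
    fv3, fv4, fv5, fv6, fv7, fz1, fz2, fz3, fz4, fz5, fz6, fz7]

lemma memB : vB ∈ rootsE6 := by
  refine ⟨Or.inr ⟨fun i => ?_, ?_⟩, ?_, ?_⟩
  · fin_cases i <;> norm_num [vB, stdVec, fv3, fv4, fv5, fv6, fv7, fz1, fz2, fz3, fz4, fz5, fz6, fz7]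
  · have hcard : (Finset.univ.filter fun i : Fin 8 => vB i = -(1 / 2)).card = 2 := by
      rw [Finset.card_filter, Fin.sum_univ_eight]
      norm_num [vB, stdVec, fv3, fv4, fv5, fv6, fv7, fz1, fz2, fz3, fz4, fz5, fz6, fz7]
    rw [hcard]; exact even_two
  all_goals
    norm_num [vB, PiLp.inner_apply, RCLike.inner_apply, Fin.sum_univ_eight, stdVec,
      fv3, fv4, fv5, fv6, fv7, fz1, fz2, fz3, fz4, fz5, fz6, fz7]

lemma memC : vC ∈ rootsE6 := by
  refine ⟨Or.inr ⟨fun i => ?_, ?_⟩, ?_, ?_⟩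
  · fin_cases i <;> norm_num [vC, stdVec, fv3, fv4, fv5, fv6, fv7, fz1, fz2, fz3, fz4, fz5, fz6, fz7]
  · have hcard : (Finset.univ.filter fun i : Fin 8 => vC i = -(1 / 2)).card = 6 := by
      rw [Finset.card_filter, Fin.sum_univ_eight]
      norm_num [vC, stdVec, fv3, fv4, fv5, fv6, fv7, fz1, fz2, fz3, fz4, fz5, fz6, fz7]
    rw [hcard]; decide
  all_goals
    norm_num [vC, PiLp.inner_apply, RCLike.inner_apply, Fin.sum_univ_eight, stdVec,
      fv3, fv4, fv5, fv6, fv7, fz1, fz2, fz3, fz4, fz5, fz6, fz7]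

lemma nsAB : ∑ k : Fin 8, ((vA + vB) k)^2 = 4 := by
  norm_num [Fin.sum_univ_eight, vA, vB, stdVec, fv3, fv4, fv5, fv6, fv7, fz1, fz2, fz3, fz4, fz5, fz6, fz7]

lemma ndAB : ∑ k : Fin 8, ((vA - vB) k)^2 = 4 := by
  norm_num [Fin.sum_univ_eight, vA, vB, stdVec, fv3, fv4, fv5, fv6, fv7, fz1, fz2, fz3, fz4, fz5, fz6, fz7]

lemma nsAC : ∑ k : Fin 8, ((vA + vC) k)^2 = 4 := by
  norm_num [Fin.sum_univ_eight, vA, vC, stdVec, fv3, fv4, fv5, fv6, fv7, fz1, fz2, fz3, fz4, fz5, fz6, fz7]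

lemma ndAC : ∑ k : Fin 8, ((vA - vC) k)^2 = 4 := by
  norm_num [Fin.sum_univ_eight, vA, vC, stdVec, fv3, fv4, fv5, fv6, fv7, fz1, fz2, fz3, fz4, fz5, fz6, fz7]

lemma nsAD : ∑ k : Fin 8, ((vA + vD) k)^2 = 4 := by
  norm_num [Fin.sum_univ_eight, vA, vD, stdVec, fv3, fv4, fv5, fv6, fv7, fz1, fz2, fz3, fz4, fz5, fz6, fz7]

lemma ndAD : ∑ k : Fin 8, ((vA - vD) k)^2 = 4 := by
  norm_num [Fin.sum_univ_eight, vA, vD, stdVec, fv3, fv4, fv5, fv6, fv7, fz1, fz2, fz3, fz4, fz5, fz6, fz7]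

lemma nsBA : ∑ k : Fin 8, ((vB + vA) k)^2 = 4 := by
  norm_num [Fin.sum_univ_eight, vB, vA, stdVec, fv3, fv4, fv5, fv6, fv7, fz1, fz2, fz3, fz4, fz5, fz6, fz7]

lemma ndBA : ∑ k : Fin 8, ((vB - vA) k)^2 = 4 := by
  norm_num [Fin.sum_univ_eight, vB, vA, stdVec, fv3, fv4, fv5, fv6, fv7, fz1, fz2, fz3, fz4, fz5, fz6, fz7]

lemma nsBC : ∑ k : Fin 8, ((vB + vC) k)^2 = 4 := by
  norm_num [Fin.sum_univ_eight, vB, vC, stdVec, fv3, fv4, fv5, fv6, fv7, fz1, fz2, fz3, fz4, fz5, fz6, fz7]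

lemma ndBC : ∑ k : Fin 8, ((vB - vC) k)^2 = 4 := by
  norm_num [Fin.sum_univ_eight, vB, vC, stdVec, fv3, fv4, fv5, fv6, fv7, fz1, fz2, fz3, fz4, fz5, fz6, fz7]

lemma nsBD : ∑ k : Fin 8, ((vB + vD) k)^2 = 4 := by
  norm_num [Fin.sum_univ_eight, vB, vD, stdVec, fv3, fv4, fv5, fv6, fv7, fz1, fz2, fz3, fz4, fz5, fz6, fz7]

lemma ndBD : ∑ k : Fin 8, ((vB - vD) k)^2 = 4 := by
  norm_num [Fin.sum_univ_eight, vB, vD, stdVec, fv3, fv4, fv5, fv6, fv7, fz1, fz2, fz3, fz4, fz5, fz6, fz7]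

lemma nsCA : ∑ k : Fin 8, ((vC + vA) k)^2 = 4 := by
  norm_num [Fin.sum_univ_eight, vC, vA, stdVec, fv3, fv4, fv5, fv6, fv7, fz1, fz2, fz3, fz4, fz5, fz6, fz7]

lemma ndCA : ∑ k : Fin 8, ((vC - vA) k)^2 = 4 := by
  norm_num [Fin.sum_univ_eight, vC, vA, stdVec, fv3, fv4, fv5, fv6, fv7, fz1, fz2, fz3, fz4, fz5, fz6, fz7]

lemma nsCB : ∑ k : Fin 8, ((vC + vB) k)^2 = 4 := by
  norm_num [Fin.sum_univ_eight, vC, vB, stdVec, fv3, fv4, fv5, fv6, fv7, fz1, fz2, fz3, fz4, fz5, fz6, fz7]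

lemma ndCB : ∑ k : Fin 8, ((vC - vB) k)^2 = 4 := by
  norm_num [Fin.sum_univ_eight, vC, vB, stdVec, fv3, fv4, fv5, fv6, fv7, fz1, fz2, fz3, fz4, fz5, fz6, fz7]

lemma nsCD : ∑ k : Fin 8, ((vC + vD) k)^2 = 4 := by
  norm_num [Fin.sum_univ_eight, vC, vD, stdVec, fv3, fv4, fv5, fv6, fv7, fz1, fz2, fz3, fz4, fz5, fz6, fz7]

lemma ndCD : ∑ k : Fin 8, ((vC - vD) k)^2 = 4 := by
  norm_num [Fin.sum_univ_eight, vC, vD, stdVec, fv3, fv4, fv5, fv6, fv7, fz1, fz2, fz3, fz4, fz5, fz6, fz7]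

lemma nsDA : ∑ k : Fin 8, ((vD + vA) k)^2 = 4 := by
  norm_num [Fin.sum_univ_eight, vD, vA, stdVec, fv3, fv4, fv5, fv6, fv7, fz1, fz2, fz3, fz4, fz5, fz6, fz7]

lemma ndDA : ∑ k : Fin 8, ((vD - vA) k)^2 = 4 := by
  norm_num [Fin.sum_univ_eight, vD, vA, stdVec, fv3, fv4, fv5, fv6, fv7, fz1, fz2, fz3, fz4, fz5, fz6, fz7]

lemma nsDB : ∑ k : Fin 8, ((vD + vB) k)^2 = 4 := by
  norm_num [Fin.sum_univ_eight, vD, vB, stdVec, fv3, fv4, fv5, fv6, fv7, fz1, fz2, fz3, fz4, fz5, fz6, fz7]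

lemma ndDB : ∑ k : Fin 8, ((vD - vB) k)^2 = 4 := by
  norm_num [Fin.sum_univ_eight, vD, vB, stdVec, fv3, fv4, fv5, fv6, fv7, fz1, fz2, fz3, fz4, fz5, fz6, fz7]

lemma nsDC : ∑ k : Fin 8, ((vD + vC) k)^2 = 4 := by
  norm_num [Fin.sum_univ_eight, vD, vC, stdVec, fv3, fv4, fv5, fv6, fv7, fz1, fz2, fz3, fz4, fz5, fz6, fz7]

lemma ndDC : ∑ k : Fin 8, ((vD - vC) k)^2 = 4 := by
  norm_num [Fin.sum_univ_eight, vD, vC, stdVec, fv3, fv4, fv5, fv6, fv7, fz1, fz2, fz3, fz4, fz5, fz6, fz7]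

lemma ngAB : vA ≠ -vB := by
  intro h
  have h0 := congrArg (fun v : EuclideanSpace ℝ (Fin 8) => v 0) h
  norm_num [vA, vB, stdVec, fv3, fv4, fv5, fv6, fv7, fz1, fz2, fz3, fz4, fz5, fz6, fz7] at h0

lemma ngAC : vA ≠ -vC := by
  intro h
  have h0 := congrArg (fun v : EuclideanSpace ℝ (Fin 8) => v 0) h
  norm_num [vA, vC, stdVec, fv3, fv4, fv5, fv6, fv7, fz1, fz2, fz3, fz4, fz5, fz6, fz7] at h0

lemma ngAD : vA ≠ -vD := by
  intro h
  have h0 := congrArg (fun v : EuclideanSpace ℝ (Fin 8) => v 0) h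
  norm_num [vA, vD, stdVec, fv3, fv4, fv5, fv6, fv7, fz1, fz2, fz3, fz4, fz5, fz6, fz7] at h0

lemma ngBA : vB ≠ -vA := by
  intro h
  have h0 := congrArg (fun v : EuclideanSpace ℝ (Fin 8) => v 0) h
  norm_num [vB, vA, stdVec, fv3, fv4, fv5, fv6, fv7, fz1, fz2, fz3, fz4, fz5, fz6, fz7] at h0

lemma ngBC : vB ≠ -vC := by
  intro h
  have h0 := congrArg (fun v : EuclideanSpace ℝ (Fin 8) => v 5) h
  norm_num [vB, vC, stdVec, fv3, fv4, fv5, fv6, fv7, fz1, fz2, fz3, fz4, fz5, fz6, fz7] at h0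

lemma ngBD : vB ≠ -vD := by
  intro h
  have h0 := congrArg (fun v : EuclideanSpace ℝ (Fin 8) => v 0) h
  norm_num [vB, vD, stdVec, fv3, fv4, fv5, fv6, fv7, fz1, fz2, fz3, fz4, fz5, fz6, fz7] at h0

lemma ngCA : vC ≠ -vA := by
  intro h
  have h0 := congrArg (fun v : EuclideanSpace ℝ (Fin 8) => v 0) h
  norm_num [vC, vA, stdVec, fv3, fv4, fv5, fv6, fv7, fz1, fz2, fz3, fz4, fz5, fz6, fz7] at h0

lemma ngCB : vC ≠ -vB := by
  intro h
  have h0 := congrArg (fun v : EuclideanSpace ℝ (Fin 8) => v 5) h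
  norm_num [vC, vB, stdVec, fv3, fv4, fv5, fv6, fv7, fz1, fz2, fz3, fz4, fz5, fz6, fz7] at h0

lemma ngCD : vC ≠ -vD := by
  intro h
  have h0 := congrArg (fun v : EuclideanSpace ℝ (Fin 8) => v 0) h
  norm_num [vC, vD, stdVec, fv3, fv4, fv5, fv6, fv7, fz1, fz2, fz3, fz4, fz5, fz6, fz7] at h0

lemma ngDA : vD ≠ -vA := by
  intro h
  have h0 := congrArg (fun v : EuclideanSpace ℝ (Fin 8) => v 0) h
  norm_num [vD, vA, stdVec, fv3, fv4, fv5, fv6, fv7, fz1, fz2, fz3, fz4, fz5, fz6, fz7] at h0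

lemma ngDB : vD ≠ -vB := by
  intro h
  have h0 := congrArg (fun v : EuclideanSpace ℝ (Fin 8) => v 0) h
  norm_num [vD, vB, stdVec, fv3, fv4, fv5, fv6, fv7, fz1, fz2, fz3, fz4, fz5, fz6, fz7] at h0

lemma ngDC : vD ≠ -vC := by
  intro h
  have h0 := congrArg (fun v : EuclideanSpace ℝ (Fin 8) => v 0) h
  norm_num [vD, vC, stdVec, fv3, fv4, fv5, fv6, fv7, fz1, fz2, fz3, fz4, fz5, fz6, fz7] at h0

lemma dqAB : vA ≠ vB := by
  intro h
  have h0 := congrArg (fun v : EuclideanSpace ℝ (Fin 8) => v 0) h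
  norm_num [vA, vB, stdVec, fv3, fv4, fv5, fv6, fv7, fz1, fz2, fz3, fz4, fz5, fz6, fz7] at h0

lemma dqAC : vA ≠ vC := by
  intro h
  have h0 := congrArg (fun v : EuclideanSpace ℝ (Fin 8) => v 0) h
  norm_num [vA, vC, stdVec, fv3, fv4, fv5, fv6, fv7, fz1, fz2, fz3, fz4, fz5, fz6, fz7] at h0

lemma dqAD : vA ≠ vD := by
  intro h
  have h0 := congrArg (fun v : EuclideanSpace ℝ (Fin 8) => v 0) h
  norm_num [vA, vD, stdVec, fv3, fv4, fv5, fv6, fv7, fz1, fz2, fz3, fz4, fz5, fz6, fz7] at h0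

lemma dqBC : vB ≠ vC := by
  intro h
  have h0 := congrArg (fun v : EuclideanSpace ℝ (Fin 8) => v 0) h
  norm_num [vB, vC, stdVec, fv3, fv4, fv5, fv6, fv7, fz1, fz2, fz3, fz4, fz5, fz6, fz7] at h0

lemma dqBD : vB ≠ vD := by
  intro h
  have h0 := congrArg (fun v : EuclideanSpace ℝ (Fin 8) => v 0) h
  norm_num [vB, vD, stdVec, fv3, fv4, fv5, fv6, fv7, fz1, fz2, fz3, fz4, fz5, fz6, fz7] at h0

lemma dqCD : vC ≠ vD := by
  intro h
  have h0 := congrArg (fun v : EuclideanSpace ℝ (Fin 8) => v 0) h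
  norm_num [vC, vD, stdVec, fv3, fv4, fv5, fv6, fv7, fz1, fz2, fz3, fz4, fz5, fz6, fz7] at h0

theorem typeEII_strongly_orthogonal_system :
    stdVec 8 3 - stdVec 8 2 ∈ rootsE6 ∧
    (1 / 2 : ℝ) • (stdVec 8 1 + stdVec 8 2 + stdVec 8 3 + stdVec 8 4 +
      stdVec 8 5 - stdVec 8 6 - stdVec 8 7 + stdVec 8 8) ∈ rootsE6 ∧
    (1 / 2 : ℝ) • (-stdVec 8 1 - stdVec 8 2 - stdVec 8 3 - stdVec 8 4 +
      stdVec 8 5 - stdVec 8 6 - stdVec 8 7 + stdVec 8 8) ∈ rootsE6 ∧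
    stdVec 8 4 - stdVec 8 1 ∈ rootsE6 ∧
    IsStronglyOrthSubset rootsE6
      {stdVec 8 3 - stdVec 8 2,
       (1 / 2 : ℝ) • (stdVec 8 1 + stdVec 8 2 + stdVec 8 3 + stdVec 8 4 +
         stdVec 8 5 - stdVec 8 6 - stdVec 8 7 + stdVec 8 8),
       (1 / 2 : ℝ) • (-stdVec 8 1 - stdVec 8 2 - stdVec 8 3 - stdVec 8 4 +
         stdVec 8 5 - stdVec 8 6 - stdVec 8 7 + stdVec 8 8),
       stdVec 8 4 - stdVec 8 1} ∧
    ({stdVec 8 3 - stdVec 8 2,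
      (1 / 2 : ℝ) • (stdVec 8 1 + stdVec 8 2 + stdVec 8 3 + stdVec 8 4 +
        stdVec 8 5 - stdVec 8 6 - stdVec 8 7 + stdVec 8 8),
      (1 / 2 : ℝ) • (-stdVec 8 1 - stdVec 8 2 - stdVec 8 3 - stdVec 8 4 +
        stdVec 8 5 - stdVec 8 6 - stdVec 8 7 + stdVec 8 8),
      stdVec 8 4 - stdVec 8 1} : Set (EuclideanSpace ℝ (Fin 8))).ncard = 4 := by
  show vA ∈ rootsE6 ∧ vB ∈ rootsE6 ∧ vC ∈ rootsE6 ∧ vD ∈ rootsE6 ∧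
    IsStronglyOrthSubset rootsE6 {vA, vB, vC, vD} ∧
    ({vA, vB, vC, vD} : Set (EuclideanSpace ℝ (Fin 8))).ncard = 4
  refine ⟨memA, memB, memC, memD, ⟨?_, ?_⟩, ?_⟩
  · intro x hx
    simp only [Set.mem_insert_iff, Set.mem_singleton_iff] at hx
    rcases hx with h|h|h|h <;> subst h
    exacts [memA, memB, memC, memD]
  · intro α hα β hβ hne
    simp only [Set.mem_insert_iff, Set.mem_singleton_iff] at hα hβ
    rcases hα with h|h|h|h <;> rcases hβ with g|g|g|g <;> subst h <;> subst g
    · exact absurd rfl hne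
    · exact ⟨ngAB, notin6 nsAB, notin6 ndAB⟩
    · exact ⟨ngAC, notin6 nsAC, notin6 ndAC⟩
    · exact ⟨ngAD, notin6 nsAD, notin6 ndAD⟩
    · exact ⟨ngBA, notin6 nsBA, notin6 ndBA⟩
    · exact absurd rfl hne
    · exact ⟨ngBC, notin6 nsBC, notin6 ndBC⟩
    · exact ⟨ngBD, notin6 nsBD, notin6 ndBD⟩
    · exact ⟨ngCA, notin6 nsCA, notin6 ndCA⟩
    · exact ⟨ngCB, notin6 nsCB, notin6 ndCB⟩
    · exact absurd rfl hne
    · exact ⟨ngCD, notin6 nsCD, notin6 ndCD⟩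
    · exact ⟨ngDA, notin6 nsDA, notin6 ndDA⟩
    · exact ⟨ngDB, notin6 nsDB, notin6 ndDB⟩
    · exact ⟨ngDC, notin6 nsDC, notin6 ndDC⟩
    · exact absurd rfl hne
  · have h1 : vA ∉ ({vB, vC, vD} : Set (EuclideanSpace ℝ (Fin 8))) := by
      simp only [Set.mem_insert_iff, Set.mem_singleton_iff, not_or]
      exact ⟨dqAB, dqAC, dqAD⟩
    have h2 : vB ∉ ({vC, vD} : Set (EuclideanSpace ℝ (Fin 8))) := by
      simp only [Set.mem_insert_iff, Set.mem_singleton_iff, not_or]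
      exact ⟨dqBC, dqBD⟩
    have h3 : vC ∉ ({vD} : Set (EuclideanSpace ℝ (Fin 8))) := by
      simp only [Set.mem_singleton_iff]
      exact dqCD
    rw [Set.ncard_insert_of_notMem h1, Set.ncard_insert_of_notMem h2,
      Set.ncard_insert_of_notMem h3, Set.ncard_singleton]
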